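/- If L is a field and S is a finitely generated subsemigroup of the multiplicative semigroup (L, ·), then there exists an injective semigroup homomorphism φ : S → (ℂ, ·). -/

import Mathlib

open Complex DirectSum

/-- An injective additive hom from `Fin n →₀ ℤ` to `ℝ`, using a `ℚ`-basis of `ℝ`. -/
lemma exists_injective_finsupp_int_to_real (n : ℕ) :
    ∃ fA : (Fin n →₀ ℤ) →+ ℝ, Function.Injective fA := by
  classical
  set ι := Module.Basis.ofVectorSpaceIndex ℚ ℝ with hι
  set b : Module.Basis ι ℚ ℝ := Module.Basis.ofVectorSpace ℚ ℝ with hb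
  haveI : Infinite ι := by
    rw [Set.infinite_coe_iff]
    intro hfin
    haveI := hfin.fintype
    haveI : Countable ℝ := Countable.of_equiv _ b.equivFun.toEquiv.symm
    exact Cardinal.not_countable_real Set.countable_univ
  let emb : Fin n ↪ ι := (Fin.valEmbedding).trans (Infinite.natEmbedding ι)
  refine ⟨Finsupp.liftAddHom (fun i => zmultiplesHom ℝ (b (emb i))), ?_⟩
  have happ : ∀ x : Fin n →₀ ℤ,
      (Finsupp.liftAddHom (fun i => zmultiplesHom ℝ (b (emb i)))) x
        = ∑ i : Fin n, ((x i : ℚ) • b (emb i)) := by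
    intro x
    rw [Finsupp.liftAddHom_apply]
    rw [Finsupp.sum_fintype _ _ (by simp)]
    simp [zmultiplesHom_apply, Int.cast_smul_eq_zsmul]
  rw [injective_iff_map_eq_zero]
  intro x hx
  rw [happ] at hx
  have li : LinearIndependent ℚ (b ∘ emb) := b.linearIndependent.comp emb emb.injective
  have := Fintype.linearIndependent_iff.mp li (fun i => (x i : ℚ)) hx
  ext i
  simp only [Finsupp.zero_apply]
  simpa using this i

/-- Key lemma: a finitely generated subgroup of the units of a field embeds into `ℂ`
multiplicatively with nonzero values. -/
lemma fg_subgroup_units_embeds (L : Type*) [Field L] (G : Subgroup Lˣ) [Group.FG G] :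
    ∃ ψ : ↥G →* ℂ, Function.Injective ψ ∧ ∀ g, ψ g ≠ 0 := by
  classical
  obtain ⟨n, ι, fι, p, hp, e, ⟨f⟩⟩ := AddCommGroup.equiv_free_prod_directSum_zmod (Additive ↥G)
  haveI : ∀ i, NeZero (p i ^ e i) := fun i => ⟨pow_ne_zero _ (hp i).ne_zero⟩
  haveI : Finite (⨁ i : ι, ZMod (p i ^ e i)) :=
    Finite.of_equiv _ DFinsupp.equivFunOnFintype.symm
  -- the torsion part embeds into `Lˣ`, hence is cyclic
  let κ : (⨁ i : ι, ZMod (p i ^ e i)) →+ Additive ↥G :=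
    f.symm.toAddMonoidHom.comp (AddMonoidHom.inr (Fin n →₀ ℤ) _)
  have hκ : Function.Injective κ := by
    intro a b hab
    have := f.symm.injective hab
    exact congrArg Prod.snd this
  let χ : Multiplicative (⨁ i : ι, ZMod (p i ^ e i)) →* L :=
    (Units.coeHom L).comp (G.subtype.comp (AddMonoidHom.toMultiplicativeLeft κ))
  have hχ : Function.Injective χ := by
    intro a b hab
    exact hκ (Subtype.val_injective (Units.ext hab))
  haveI : IsCyclic (Multiplicative (⨁ i : ι, ZMod (p i ^ e i))) :=
    isCyclic_of_subgroup_isDomain χ hχ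
  haveI hcyc : IsAddCyclic (⨁ i : ι, ZMod (p i ^ e i)) := isCyclic_multiplicative_iff.mp this
  set m := Nat.card (⨁ i : ι, ZMod (p i ^ e i)) with hm
  haveI : NeZero m := ⟨Nat.card_pos.ne'⟩
  let θ : ZMod m ≃+ (⨁ i : ι, ZMod (p i ^ e i)) := zmodAddCyclicAddEquiv hcyc
  obtain ⟨fA, hfA⟩ := exists_injective_finsupp_int_to_real n
  -- the embedding
  refine ⟨⟨⟨fun g =>
      Complex.exp ((fA (f (Additive.ofMul g)).1 : ℝ) : ℂ) *
        ((ZMod.toCircle (θ.symm (f (Additive.ofMul g)).2) : Circle) : ℂ), ?_⟩, ?_⟩, ?_, ?_⟩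
  · have h0 : (f (Additive.ofMul (1 : ↥G))) = 0 := by
      rw [show Additive.ofMul (1 : ↥G) = 0 from rfl, map_zero]
    show Complex.exp ((fA (f (Additive.ofMul (1 : ↥G))).1 : ℝ) : ℂ) *
        ((ZMod.toCircle (θ.symm (f (Additive.ofMul (1 : ↥G))).2) : Circle) : ℂ) = 1
    rw [h0]
    simp
  · intro g h
    have hadd : f (Additive.ofMul (g * h)) = f (Additive.ofMul g) + f (Additive.ofMul h) := by
      rw [← map_add]; rfl
    simp only [hadd, Prod.fst_add, Prod.snd_add, map_add, AddChar.map_add_eq_mul,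
      Complex.ofReal_add, Complex.exp_add, Circle.coe_mul]
    ring
  · intro g g' hgg
    simp only [MonoidHom.coe_mk, OneHom.coe_mk] at hgg
    have h1 : fA (f (Additive.ofMul g)).1 = fA (f (Additive.ofMul g')).1 := by
      have := congrArg norm hgg
      simpa [Complex.norm_exp, Circle.norm_coe] using this
    have a1 : (f (Additive.ofMul g)).1 = (f (Additive.ofMul g')).1 := hfA h1
    have h2 : ((ZMod.toCircle (θ.symm (f (Additive.ofMul g)).2) : Circle) : ℂ)
        = ((ZMod.toCircle (θ.symm (f (Additive.ofMul g')).2) : Circle) : ℂ) := by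
      rw [h1] at hgg
      exact mul_left_cancel₀ (Complex.exp_ne_zero _) hgg
    have a2 : (f (Additive.ofMul g)).2 = (f (Additive.ofMul g')).2 :=
      θ.symm.injective (ZMod.injective_toCircle (Subtype.val_injective h2))
    have : f (Additive.ofMul g) = f (Additive.ofMul g') := Prod.ext a1 a2
    exact Additive.ofMul.injective (f.injective this)
  · intro g
    exact mul_ne_zero (Complex.exp_ne_zero _) (Circle.coe_ne_zero _)

/-- If `L` is a field and `S` is a finitely generated subsemigroup of
the multiplicative semigroup `(L, ·)`, then there is an injective semigroup
homomorphism `φ : S → (ℂ, ·)`. -/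
theorem fg_mul_subsemigroup_embeds_into_complex
    (L : Type*) [Field L] (S : Subsemigroup L)
    (hfg : ∃ s : Finset L, S = Subsemigroup.closure (s : Set L)) :
    ∃ φ : S →ₙ* ℂ, Function.Injective φ := by
  classical
  obtain ⟨s, rfl⟩ := hfg
  set U : Set Lˣ := ((↑) : Lˣ → L) ⁻¹' (s : Set L) with hU
  haveI : Finite U := (s.finite_toSet.preimage (Units.val_injective.injOn)).to_subtype
  set G : Subgroup Lˣ := Subgroup.closure U with hG
  haveI : Group.FG G := Group.closure_finite_fg U
  obtain ⟨ψ, hinj, hne⟩ := fg_subgroup_units_embeds L G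
  have hmem : ∀ x : L, x ∈ Subsemigroup.closure (s : Set L) → ∀ h : x ≠ 0,
      Units.mk0 x h ∈ G := by
    intro x hx
    induction hx using Subsemigroup.closure_induction with
    | mem y hy =>
      intro h
      exact Subgroup.subset_closure (show ((Units.mk0 y h : Lˣ) : L) ∈ (s : Set L) from hy)
    | mul x y hx hy ihx ihy =>
      intro h
      have hx0 : x ≠ 0 := left_ne_zero_of_mul h
      have hy0 : y ≠ 0 := right_ne_zero_of_mul h
      have : Units.mk0 (x * y) h = Units.mk0 x hx0 * Units.mk0 y hy0 := Units.ext rfl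
      rw [this]
      exact mul_mem (ihx hx0) (ihy hy0)
  refine ⟨⟨fun x => if h : (x : L) = 0 then 0
      else ψ ⟨Units.mk0 (x : L) h, hmem _ x.2 h⟩, ?_⟩, ?_⟩
  · intro x y
    by_cases hx : (x : L) = 0
    · have hxy : ((x * y : _) : L) = 0 := by
        show ((x : L) * (y : L)) = 0
        rw [hx, zero_mul]
      rw [dif_pos hxy, dif_pos hx, zero_mul]
    · by_cases hy : (y : L) = 0
      · have hxy : ((x * y : _) : L) = 0 := by
          show ((x : L) * (y : L)) = 0
          rw [hy, mul_zero]
        rw [dif_pos hxy, dif_pos hy, mul_zero]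
      · have hxy : ((x * y : _) : L) ≠ 0 := by
          show ((x : L) * (y : L)) ≠ 0
          exact mul_ne_zero hx hy
        rw [dif_neg hxy, dif_neg hx, dif_neg hy, ← map_mul]
        congr 1
        exact Subtype.ext (Units.ext rfl)
  · intro x y hxy
    simp only [MulHom.coe_mk] at hxy
    by_cases hx : (x : L) = 0
    · by_cases hy : (y : L) = 0
      · exact Subtype.ext (hx.trans hy.symm)
      · rw [dif_pos hx, dif_neg hy] at hxy
        exact absurd hxy.symm (hne _)
    · by_cases hy : (y : L) = 0
      · rw [dif_neg hx, dif_pos hy] at hxy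
        exact absurd hxy (hne _)
      · rw [dif_neg hx, dif_neg hy] at hxy
        have := hinj hxy
        have h2 : Units.mk0 (x : L) hx = Units.mk0 (y : L) hy := congrArg Subtype.val this
        have h3 : (x : L) = (y : L) := congrArg Units.val h2
        exact Subtype.ext h3
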